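/- arXiv:0907.1506 — 2 statements merged into one kernel-verified Lean document; each statement's English description precedes it below -/
import Mathlib

section
/- Let n be a natural number and let P be a nonzero polynomial in two variables with real coefficients of total degree at most n. Let a be a positive integer, let ε be a positive real number, and let r be a positive real number. Assume there exists a natural number M such that P(p, q) = 0 for all integers p, q with p ≥ M, q ≥ M and 0 < a·q − r·p < ε. Then r is a rational number, and when r is written in lowest terms as r = u/v with u, v positive coprime integers, the denominator satisfies v ≤ a(n+1)/ε. -/
open Polynomial


lemma KM_eval_aeval (P : MvPolynomial (Fin 2) ℝ) (v : Fin 2 → Polynomial ℝ) (t : ℝ) :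
    (MvPolynomial.aeval v P).eval t = MvPolynomial.eval (fun i => (v i).eval t) P := by
  induction P using MvPolynomial.induction_on with
  | C a => simp
  | add p q hp hq => simp [hp, hq]
  | mul_X p i hp => simp [hp]

lemma KM_natDegree_aeval_le (P : MvPolynomial (Fin 2) ℝ) (v : Fin 2 → Polynomial ℝ)
    (hv : ∀ i, (v i).natDegree ≤ 1) :
    (MvPolynomial.aeval v P).natDegree ≤ P.totalDegree := by
  conv_lhs => rw [P.as_sum]
  rw [map_sum]
  apply Polynomial.natDegree_sum_le_of_forall_le
  intro e he
  rw [MvPolynomial.aeval_monomial]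
  refine Polynomial.natDegree_mul_le.trans ?_
  have h1 : (algebraMap ℝ (Polynomial ℝ) (MvPolynomial.coeff e P)).natDegree = 0 :=
    Polynomial.natDegree_C _
  rw [h1, zero_add]
  refine (Polynomial.natDegree_prod_le _ _).trans ?_
  refine le_trans ?_ (MvPolynomial.le_totalDegree he)
  rw [Finsupp.sum]
  apply Finset.sum_le_sum
  intro i _
  calc (v i ^ e i).natDegree ≤ e i * (v i).natDegree := Polynomial.natDegree_pow_le
    _ ≤ e i * 1 := Nat.mul_le_mul_left _ (hv i)
    _ = e i := Nat.mul_one _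

lemma KM_engine (n : ℕ) (P : MvPolynomial (Fin 2) ℝ)
    (hdeg : P.totalDegree ≤ n) (a : ℕ) (ha : 0 < a)
    (ε : ℝ) (hε : 0 < ε) (r : ℝ) (hr : 0 < r) (M : ℕ)
    (hvan : ∀ p q : ℤ, (M : ℤ) ≤ p → (M : ℤ) ≤ q →
      0 < (a : ℝ) * q - r * p → (a : ℝ) * q - r * p < ε →
      MvPolynomial.eval ![(p : ℝ), (q : ℝ)] P = 0)
    (key : ∀ B : ℤ, ∃ p q : ℤ, B ≤ p ∧ B ≤ q ∧
      0 < (a : ℝ) * q - r * p ∧ (a : ℝ) * q - r * p < ε / (n + 1)) :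
    P = 0 := by
  set δ : ℝ := ε / (n + 1) with hδdef
  have hn1 : (0:ℝ) < (n:ℝ) + 1 := by positivity
  have hδ : 0 < δ := by positivity
  -- direction
  obtain ⟨p', q', hp'B, hq'B, hs'pos, hs'lt⟩ := key (max 1 (M:ℤ))
  have hp'1 : (1:ℤ) ≤ p' := le_trans (le_max_left _ _) hp'B
  have hq'1 : (1:ℤ) ≤ q' := le_trans (le_max_left _ _) hq'B
  have hp'R : (0:ℝ) < (p':ℝ) := by exact_mod_cast lt_of_lt_of_le zero_lt_one hp'1
  set s' : ℝ := (a:ℝ) * q' - r * p' with hs'def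
  -- line vanishing
  have line : ∀ p q : ℤ, (M : ℤ) ≤ p → (M : ℤ) ≤ q →
      0 < (a : ℝ) * q - r * p → (a : ℝ) * q - r * p < δ → ∀ x : ℝ,
      MvPolynomial.eval ![(p:ℝ) + (p':ℝ) * x, (q:ℝ) + (q':ℝ) * x] P = 0 := by
    intro p q hpM hqM hFpos hFlt x
    set g : Polynomial ℝ :=
      MvPolynomial.aeval ![Polynomial.C (p:ℝ) + Polynomial.C (p':ℝ) * X,
        Polynomial.C (q:ℝ) + Polynomial.C (q':ℝ) * X] P with hgdef
    have hgeval : ∀ t : ℝ, g.eval t =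
        MvPolynomial.eval ![(p:ℝ) + (p':ℝ) * t, (q:ℝ) + (q':ℝ) * t] P := by
      intro t
      rw [hgdef, KM_eval_aeval]
      have hv : (fun i => Polynomial.eval t (![Polynomial.C (p:ℝ) + Polynomial.C (p':ℝ) * X,
          Polynomial.C (q:ℝ) + Polynomial.C (q':ℝ) * X] i))
          = ![(p:ℝ) + (p':ℝ) * t, (q:ℝ) + (q':ℝ) * t] := by
        funext i
        fin_cases i <;> simp
      rw [hv]
    have hg0 : g = 0 := by
      apply Polynomial.eq_zero_of_natDegree_lt_card_of_eval_eq_zero' g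
        ((Finset.range (n+1)).image (fun m : ℕ => (m:ℝ)))
      · intro c hc
        simp only [Finset.mem_image, Finset.mem_range] at hc
        obtain ⟨m, hm, rfl⟩ := hc
        rw [hgeval]
        have h1 : ((p + m * p' : ℤ) : ℝ) = (p:ℝ) + (p':ℝ) * m := by push_cast; ring
        have h2 : ((q + m * q' : ℤ) : ℝ) = (q:ℝ) + (q':ℝ) * m := by push_cast; ring
        rw [← h1, ← h2]
        apply hvan
        · have : (0:ℤ) ≤ (m:ℤ) * p' := by positivity
          omega
        · have : (0:ℤ) ≤ (m:ℤ) * q' := by positivity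
          omega
        · rw [h1, h2]
          have : (a:ℝ) * ((q:ℝ) + (q':ℝ) * m) - r * ((p:ℝ) + (p':ℝ) * m)
              = ((a:ℝ) * q - r * p) + (m:ℝ) * s' := by rw [hs'def]; ring
          rw [this]
          have hm0 : (0:ℝ) ≤ (m:ℝ) * s' := by positivity
          linarith
        · rw [h1, h2]
          have : (a:ℝ) * ((q:ℝ) + (q':ℝ) * m) - r * ((p:ℝ) + (p':ℝ) * m)
              = ((a:ℝ) * q - r * p) + (m:ℝ) * s' := by rw [hs'def]; ring
          rw [this]
          have hmn : (m:ℝ) ≤ (n:ℝ) := by exact_mod_cast Nat.le_of_lt_succ hm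
          have h3 : (m:ℝ) * s' ≤ (n:ℝ) * δ := by
            apply mul_le_mul hmn (le_of_lt hs'lt) (le_of_lt hs'pos) (by positivity)
          have h4 : ((a:ℝ) * q - r * p) + (m:ℝ) * s' < δ + (n:ℝ) * δ := by linarith
          have h5 : δ + (n:ℝ) * δ = ε := by
            rw [hδdef]; field_simp; ring
          linarith
      · have hcard : ((Finset.range (n+1)).image (fun m : ℕ => (m:ℝ))).card = n + 1 := by
          rw [Finset.card_image_of_injective _ (fun x y h => by exact_mod_cast h)]
          exact Finset.card_range _
        rw [hcard]
        have : g.natDegree ≤ n := by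
          refine le_trans (KM_natDegree_aeval_le _ _ ?_) hdeg
          intro i
          have hlin : ∀ u w : ℝ, (Polynomial.C u + Polynomial.C w * X).natDegree ≤ 1 := by
            intro u w
            refine le_trans (Polynomial.natDegree_add_le _ _) ?_
            have h1 : (Polynomial.C u).natDegree ≤ 1 := by
              simp [Polynomial.natDegree_C]
            have h2 : (Polynomial.C w * X).natDegree ≤ 1 :=
              le_trans (Polynomial.natDegree_C_mul_le _ _) Polynomial.natDegree_X_le
            exact max_le h1 h2
          fin_cases i
          · exact hlin (p:ℝ) (p':ℝ)
          · exact hlin (q:ℝ) (q':ℝ)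
        omega
    rw [← hgeval x, hg0]
    simp
  -- the set of intercepts
  set S : Set ℝ := {c : ℝ | ∃ p q : ℤ, (M : ℤ) ≤ p ∧ (M : ℤ) ≤ q ∧
      (0 < (a : ℝ) * q - r * p) ∧ ((a : ℝ) * q - r * p < δ) ∧
      c = (q:ℝ) - (q':ℝ) / (p':ℝ) * p} with hSdef
  have hSinf : S.Infinite := by
    intro hfin
    have hbdd : BddBelow S := hfin.bddBelow
    obtain ⟨L, hL⟩ := hbdd
    -- choose p large enough that c < L
    obtain ⟨p, q, hpB, hqB, hF1, hF2⟩ :=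
      key (max (M:ℤ) (⌈(δ / a - L) * ((a:ℝ) * p') / s'⌉ + 1))
    have hpM : (M:ℤ) ≤ p := le_trans (le_max_left _ _) hpB
    have hqM : (M:ℤ) ≤ q := le_trans (le_max_left _ _) hqB
    set c : ℝ := (q:ℝ) - (q':ℝ) / (p':ℝ) * p with hcdef
    have hcS : c ∈ S := ⟨p, q, hpM, hqM, hF1, hF2, rfl⟩
    have hcL : L ≤ c := hL hcS
    -- but c = F/a - p * s'/(a p') < L
    have haR : (0:ℝ) < (a:ℝ) := by exact_mod_cast ha
    have hceq : c = ((a:ℝ) * q - r * p) / a - (p:ℝ) * s' / ((a:ℝ) * p') := by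
      rw [hcdef, hs'def]; field_simp; ring
    have hpbig : ((δ / a - L) * ((a:ℝ) * p') / s') < (p:ℝ) := by
      have h1 : (⌈(δ / a - L) * ((a:ℝ) * p') / s'⌉ : ℝ) < (p:ℝ) := by
        have : ⌈(δ / a - L) * ((a:ℝ) * p') / s'⌉ + 1 ≤ p :=
          le_trans (le_max_right _ _) hpB
        exact_mod_cast lt_of_lt_of_le (by omega : ⌈(δ / a - L) * ((a:ℝ) * p') / s'⌉
          < ⌈(δ / a - L) * ((a:ℝ) * p') / s'⌉ + 1) this
      exact lt_of_le_of_lt (Int.le_ceil _) h1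
    have hap' : (0:ℝ) < (a:ℝ) * p' := by positivity
    have h2 : (δ / a - L) < (p:ℝ) * s' / ((a:ℝ) * p') := by
      rw [div_lt_iff₀ hs'pos] at hpbig
      rw [lt_div_iff₀ hap']
      linarith
    have h6 : ((a:ℝ) * q - r * p) / a < δ / a := by gcongr
    have h3 : c < δ / a - (p:ℝ) * s' / ((a:ℝ) * p') := by
      rw [hceq]; linarith
    have : c < L := by clear_value δ s' c S; linarith
    exact absurd hcL (not_le.mpr this)
  have main : ∀ x y : ℝ, MvPolynomial.eval ![(p':ℝ) * x, (q':ℝ) * x + y] P = 0 := by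
    intro x y
    set R : Polynomial ℝ := MvPolynomial.aeval
      ![Polynomial.C ((p':ℝ) * x), Polynomial.C ((q':ℝ) * x) + X] P with hRdef
    have hReval : ∀ c : ℝ, R.eval c = MvPolynomial.eval ![(p':ℝ) * x, (q':ℝ) * x + c] P := by
      intro c
      rw [hRdef, KM_eval_aeval]
      have hv : (fun i => Polynomial.eval c (![Polynomial.C ((p':ℝ) * x),
          Polynomial.C ((q':ℝ) * x) + X] i)) = ![(p':ℝ) * x, (q':ℝ) * x + c] := by
        funext i; fin_cases i <;> simp
      rw [hv]
    have hroot : S ⊆ {c : ℝ | R.IsRoot c} := by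
      intro c hc
      obtain ⟨p, q, hpM, hqM, hF1, hF2, rfl⟩ := hc
      have hline := line p q hpM hqM hF1 hF2 (x - (p:ℝ)/(p':ℝ))
      have hpt : (![(p:ℝ) + (p':ℝ)*(x - (p:ℝ)/(p':ℝ)), (q:ℝ) + (q':ℝ)*(x - (p:ℝ)/(p':ℝ))] :
          Fin 2 → ℝ) = ![(p':ℝ)*x, (q':ℝ)*x + ((q:ℝ) - (q':ℝ)/(p':ℝ)*(p:ℝ))] := by
        funext i
        fin_cases i <;>
        · simp only [Matrix.cons_val_zero, Matrix.cons_val_one, Matrix.head_cons]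
          field_simp
          ring
      rw [hpt] at hline
      show R.IsRoot _
      rw [Polynomial.IsRoot, hReval]
      exact hline
    have hR0 : R = 0 := Polynomial.eq_zero_of_infinite_isRoot R (hSinf.mono hroot)
    rw [← hReval y, hR0]
    simp
  apply MvPolynomial.funext
  intro w
  have hw : w = ![w 0, w 1] := by
    funext i; fin_cases i <;> simp
  set x : ℝ := w 0 / (p':ℝ) with hxdef
  set y : ℝ := w 1 - (q':ℝ) * x with hydef
  have h0 : (p':ℝ) * x = w 0 := by
    rw [hxdef]; field_simp
  have h1 : (q':ℝ) * x + y = w 1 := by rw [hydef]; ring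
  have hm := main x y
  rw [h0, h1] at hm
  rw [map_zero]
  conv_lhs => rw [hw]
  exact hm


-- small positive values q - β p with p,q ≥ 1, for irrational β > 0
lemma KM_small_pos (β : ℝ) (hβpos : 0 < β) (hβ : ∀ s : ℚ, (s:ℝ) ≠ β)
    (δ : ℝ) (hδ : 0 < δ) :
    ∃ p q : ℤ, 1 ≤ p ∧ 1 ≤ q ∧ 0 < (q:ℝ) - β * p ∧ (q:ℝ) - β * p < δ := by
  obtain ⟨n, hn⟩ := exists_nat_gt (1/δ)
  have hn1 : 0 < n + 1 := Nat.succ_pos n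
  have hδn : 1 / ((n:ℝ) + 1 + 1) < δ := by
    rw [div_lt_iff₀ (by positivity)]
    rw [div_lt_iff₀ hδ] at hn
    nlinarith
  obtain ⟨j, k, hk0, hkn, habs⟩ := Real.exists_int_int_abs_mul_sub_le β hn1
  set x : ℝ := (k:ℝ) * β - j with hxdef
  have hxb : |x| ≤ 1 / ((n:ℝ) + 1 + 1) := by
    convert habs using 3
    push_cast; ring
  have hxne : x ≠ 0 := by
    intro h
    apply hβ ((j : ℚ) / (k : ℚ))
    have hk : (k:ℝ) ≠ 0 := by exact_mod_cast hk0.ne'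
    have hx0' : (k:ℝ) * β - j = 0 := by rw [← hxdef]; exact h
    push_cast
    rw [div_eq_iff hk]
    linarith
  have hx1 : |x| < 1 := lt_of_le_of_lt hxb (by
    rw [div_lt_one (by positivity)]; push_cast; linarith)
  have hxδ : |x| < δ := lt_of_le_of_lt hxb hδn
  -- helper for q ≥ 1
  have hq1 : ∀ p q : ℤ, 1 ≤ p → 0 < (q:ℝ) - β * p → 1 ≤ q := by
    intro p q hp h
    have : (0:ℝ) < (q:ℝ) := by
      have : (0:ℝ) < β * p := by
        have : (1:ℝ) ≤ (p:ℝ) := by exact_mod_cast hp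
        nlinarith
      linarith
    have hq0 : (0:ℤ) < q := by exact_mod_cast this
    omega
  rcases lt_or_gt_of_ne hxne with hneg | hpos
  · refine ⟨k, j, hk0, ?_, ?_, ?_⟩
    · apply hq1 k j hk0
      rw [show (j:ℝ) - β * k = -x by rw [hxdef]; ring]
      linarith [abs_of_neg hneg ▸ hxδ]
    · rw [show (j:ℝ) - β * k = -x by rw [hxdef]; ring]; linarith
    · rw [show (j:ℝ) - β * k = -x by rw [hxdef]; ring]
      rw [abs_of_neg hneg] at hxδ; linarith
  · -- flip: m = ⌊1/x⌋
    have hx0 : 0 < x := hpos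
    set m : ℤ := ⌊1/x⌋ with hmdef
    have hm1 : 1 ≤ m := by
      rw [hmdef]
      apply Int.le_floor.mpr
      rw [Int.cast_one, le_div_iff₀ hx0, one_mul]
      exact le_of_lt (abs_of_pos hx0 ▸ hx1)
    have hmle : (m:ℝ) ≤ 1/x := Int.floor_le _
    have hmgt : 1/x - 1 < (m:ℝ) := by
      rw [hmdef]; exact Int.sub_one_lt_floor _
    have hmx_le : (m:ℝ) * x ≤ 1 := by
      rw [← le_div_iff₀ hx0]
      exact hmle
    have hinv : (1/x) * x = 1 := by field_simp
    have h7 : (1/x - 1) * x < (m:ℝ) * x := mul_lt_mul_of_pos_right hmgt hx0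
    have hmx_gt : 1 - x < (m:ℝ) * x := by nlinarith [h7, hinv]
    have hmx_ne : (m:ℝ) * x ≠ 1 := by
      intro h
      apply hβ (((m * j + 1 : ℤ) : ℚ) / ((m * k : ℤ) : ℚ))
      have hmk : ((m * k : ℤ) : ℝ) ≠ 0 := by
        have : (0:ℤ) < m * k := mul_pos (by omega) hk0
        exact_mod_cast this.ne'
      push_cast at hmk ⊢
      rw [div_eq_iff hmk]
      -- β * (m k) = m j + 1 ; since m x = 1: m(kβ - j) = 1
      have : (m:ℝ) * ((k:ℝ) * β - j) = 1 := by rw [← hxdef]; exact h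
      nlinarith [this]
    refine ⟨m * k, m * j + 1, mul_pos (by omega) hk0, ?_, ?_, ?_⟩
    · apply hq1 (m*k) (m*j+1) (mul_pos (by omega) hk0)
      push_cast
      rw [show (m:ℝ)*j + 1 - β*((m:ℝ)*k) = 1 - m*x by rw [hxdef]; ring]
      cases' lt_or_eq_of_le hmx_le with h h
      · linarith
      · exact absurd h hmx_ne
    · push_cast
      rw [show (m:ℝ)*j + 1 - β*((m:ℝ)*k) = 1 - m*x by rw [hxdef]; ring]
      cases' lt_or_eq_of_le hmx_le with h h
      · linarith
      · exact absurd h hmx_ne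
    · push_cast
      rw [show (m:ℝ)*j + 1 - β*((m:ℝ)*k) = 1 - m*x by rw [hxdef]; ring]
      rw [abs_of_pos hx0] at hxδ
      linarith

lemma KM_key_irrational (a : ℕ) (ha : 0 < a) (r : ℝ) (hr : 0 < r)
    (hirr : ∀ s : ℚ, (s:ℝ) ≠ r / a) (δ : ℝ) (hδ : 0 < δ) :
    ∀ B : ℤ, ∃ p q : ℤ, B ≤ p ∧ B ≤ q ∧ 0 < (a:ℝ)*q - r*p ∧ (a:ℝ)*q - r*p < δ := by
  intro B
  set J : ℤ := max B 1 with hJdef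
  have hJ1 : 1 ≤ J := le_max_right _ _
  have hJR : (0:ℝ) < (J:ℝ) := by exact_mod_cast lt_of_lt_of_le one_pos hJ1
  have haR : (0:ℝ) < (a:ℝ) := by exact_mod_cast ha
  have hβ : 0 < r / a := by positivity
  obtain ⟨p1, q1, hp1, hq1, hy0, hyδ⟩ :=
    KM_small_pos (r/a) hβ hirr (δ / ((a:ℝ) * (J:ℝ))) (by positivity)
  refine ⟨J * p1, J * q1, ?_, ?_, ?_, ?_⟩
  · calc B ≤ J := le_max_left _ _
      _ = J * 1 := (mul_one J).symm
      _ ≤ J * p1 := mul_le_mul_of_nonneg_left hp1 (by omega)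
  · calc B ≤ J := le_max_left _ _
      _ = J * 1 := (mul_one J).symm
      _ ≤ J * q1 := mul_le_mul_of_nonneg_left hq1 (by omega)
  · have hval : (a:ℝ)*((J*q1 : ℤ):ℝ) - r*((J*p1:ℤ):ℝ)
        = (J:ℝ)*(a:ℝ)*((q1:ℝ) - (r/a)*p1) := by
      push_cast
      field_simp
    rw [hval]
    have : (0:ℝ) < (q1:ℝ) - (r/a)*p1 := hy0
    positivity
  · have hval : (a:ℝ)*((J*q1 : ℤ):ℝ) - r*((J*p1:ℤ):ℝ)
        = (J:ℝ)*(a:ℝ)*((q1:ℝ) - (r/a)*p1) := by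
      push_cast
      field_simp
    rw [hval]
    have h1 : (J:ℝ)*(a:ℝ)*((q1:ℝ) - (r/a)*p1) < (J:ℝ)*(a:ℝ)*(δ/((a:ℝ)*J)) :=
      mul_lt_mul_of_pos_left hyδ (by positivity)
    have h2 : (J:ℝ)*(a:ℝ)*(δ/((a:ℝ)*J)) = δ := by field_simp
    linarith

lemma KM_key_rational (a : ℕ) (ha : 0 < a) (u v : ℕ) (hu : 0 < u) (hv : 0 < v)
    (hcop : Nat.Coprime u v) (r : ℝ) (hruv : r = (u:ℝ)/v)
    (δ : ℝ) (hδ : 0 < δ) (hbig : (a:ℝ) < (v:ℝ) * δ) :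
    ∀ B : ℤ, ∃ p q : ℤ, B ≤ p ∧ B ≤ q ∧ 0 < (a:ℝ)*q - r*p ∧ (a:ℝ)*q - r*p < δ := by
  intro B
  set g : ℕ := Nat.gcd u (a * v) with hgdef
  have hg0 : 0 < g := Nat.gcd_pos_of_pos_left _ hu
  have hgv : Nat.Coprime g v :=
    Nat.Coprime.coprime_dvd_left (Nat.gcd_dvd_left _ _) hcop
  have hga : g ∣ a := hgv.dvd_of_dvd_mul_right (Nat.gcd_dvd_right u (a*v))
  have hgalea : g ≤ a := Nat.le_of_dvd ha hga
  set A : ℤ := Int.gcdA (u:ℤ) ((a*v : ℕ):ℤ) with hAdef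
  set Bz : ℤ := Int.gcdB (u:ℤ) ((a*v : ℕ):ℤ) with hBzdef
  have hbez : (g:ℤ) = (u:ℤ) * A + ((a*v:ℕ):ℤ) * Bz := by
    have h := Int.gcd_eq_gcd_ab (u:ℤ) ((a*v:ℕ):ℤ)
    rwa [Int.gcd_natCast_natCast, ← hgdef, ← hAdef, ← hBzdef] at h
  set p0 : ℤ := -A with hp0def
  set q0 : ℤ := Bz with hq0def
  set k : ℤ := max (B - p0) (max (B - q0) 0) with hkdef
  have hk0 : 0 ≤ k := le_trans (le_max_right _ _) (le_max_right _ _)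
  set p : ℤ := p0 + k * ((a:ℤ)*(v:ℤ)) with hpdef
  set q : ℤ := q0 + k * (u:ℤ) with hqdef
  have hav1 : (1:ℤ) ≤ (a:ℤ)*(v:ℤ) := by
    have : (0:ℤ) < (a:ℤ)*(v:ℤ) := by exact_mod_cast mul_pos ha hv
    omega
  have hu1 : (1:ℤ) ≤ (u:ℤ) := by exact_mod_cast hu
  have hint : (a:ℤ)*(v:ℤ)*q - (u:ℤ)*p = (g:ℤ) := by
    rw [hpdef, hqdef, hp0def, hq0def, hbez]
    push_cast
    ring
  have hkav : k ≤ k * ((a:ℤ)*(v:ℤ)) := by nlinarith [hk0, hav1]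
  have hku : k ≤ k * (u:ℤ) := by nlinarith [hk0, hu1]
  refine ⟨p, q, ?_, ?_, ?_, ?_⟩
  · have h1 : B - p0 ≤ k := le_max_left _ _
    rw [hpdef]; omega
  · have h1 : B - q0 ≤ k := le_trans (le_max_left _ _) (le_max_right _ _)
    rw [hqdef]; omega
  · have hvR : (0:ℝ) < (v:ℝ) := by exact_mod_cast hv
    have hval : (a:ℝ)*(q:ℝ) - r*(p:ℝ) = (g:ℝ)/(v:ℝ) := by
      rw [hruv]
      rw [eq_div_iff hvR.ne']
      have : ((a:ℤ)*(v:ℤ)*q - (u:ℤ)*p : ℤ) = (g:ℤ) := hint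
      have h2 : ((a:ℤ)*(v:ℤ)*q - (u:ℤ)*p : ℝ) = (g:ℝ) := by exact_mod_cast congrArg (Int.cast : ℤ → ℝ) this
      push_cast at h2 ⊢
      field_simp
      linarith [h2]
    rw [hval]
    positivity
  · have hvR : (0:ℝ) < (v:ℝ) := by exact_mod_cast hv
    have hval : (a:ℝ)*(q:ℝ) - r*(p:ℝ) = (g:ℝ)/(v:ℝ) := by
      rw [hruv]
      rw [eq_div_iff hvR.ne']
      have : ((a:ℤ)*(v:ℤ)*q - (u:ℤ)*p : ℤ) = (g:ℤ) := hint
      have h2 : ((a:ℤ)*(v:ℤ)*q - (u:ℤ)*p : ℝ) = (g:ℝ) := by exact_mod_cast congrArg (Int.cast : ℤ → ℝ) this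
      push_cast at h2 ⊢
      field_simp
      linarith [h2]
    rw [hval]
    have h3 : (g:ℝ) ≤ (a:ℝ) := by exact_mod_cast hgalea
    rw [div_lt_iff₀ hvR]
    nlinarith [hbig]

/-- Kollár–Mori Lemma 3.19, as used in the rationality theorem for quasi-log
pairs: if a nonzero real polynomial `P` in two variables of total degree at
most `n` vanishes at all sufficiently large integral points `(p, q)` with
`0 < a*q - r*p < ε`, then `r` is rational and, in lowest terms `r = u/v`,
its denominator satisfies `v ≤ a*(n+1)/ε`. -/
theorem stmt_0 (n : ℕ) (P : MvPolynomial (Fin 2) ℝ) (hP : P ≠ 0)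
    (hdeg : P.totalDegree ≤ n) (a : ℕ) (ha : 0 < a)
    (ε : ℝ) (hε : 0 < ε) (r : ℝ) (hr : 0 < r)
    (hvan : ∃ M : ℕ, ∀ p q : ℤ, (M : ℤ) ≤ p → (M : ℤ) ≤ q →
      0 < (a : ℝ) * q - r * p → (a : ℝ) * q - r * p < ε →
      MvPolynomial.eval ![(p : ℝ), (q : ℝ)] P = 0) :
    ∃ u v : ℕ, 0 < u ∧ 0 < v ∧ Nat.Coprime u v ∧ r = (u : ℝ) / v ∧
      (v : ℝ) ≤ (a : ℝ) * (n + 1) / ε := by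
  obtain ⟨M, hvanM⟩ := hvan
  have haR : (0:ℝ) < (a:ℝ) := by exact_mod_cast ha
  have hn1 : (0:ℝ) < (n:ℝ) + 1 := by positivity
  have hδ : (0:ℝ) < ε / ((n:ℝ)+1) := by positivity
  by_cases hrat : ∃ s : ℚ, (s:ℝ) = r / a
  · obtain ⟨s, hs⟩ := hrat
    have hs0 : 0 < s := by
      have : (0:ℝ) < (s:ℝ) := by rw [hs]; positivity
      exact_mod_cast this
    set qr : ℚ := a * s with hqrdef
    have hqr0 : 0 < qr := by
      rw [hqrdef]
      have : (0:ℚ) < (a:ℚ) := by exact_mod_cast ha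
      exact mul_pos this hs0
    have hqrR : (qr:ℝ) = r := by
      rw [hqrdef]; push_cast; rw [hs]; field_simp
    have hnum : (0:ℤ) < qr.num := Rat.num_pos.mpr hqr0
    have hupos : 0 < qr.num.natAbs := Int.natAbs_pos.mpr hnum.ne'
    have hcast : ((qr.num.natAbs : ℕ) : ℝ) = ((qr.num : ℤ) : ℝ) := by
      have h := Int.natAbs_of_nonneg hnum.le
      rw [← h, Int.cast_natCast]
      simp [Int.natAbs_abs]
    have hruv : r = ((qr.num.natAbs : ℕ) : ℝ) / (qr.den : ℝ) := by
      rw [hcast, ← hqrR, Rat.cast_def]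
    refine ⟨qr.num.natAbs, qr.den, hupos, qr.pos, qr.reduced, hruv, ?_⟩
    by_contra hcon
    push_neg at hcon
    have hbig : (a:ℝ) < (qr.den:ℝ) * (ε/((n:ℝ)+1)) := by
      rw [div_lt_iff₀ hε] at hcon
      have heq : (qr.den:ℝ) * (ε/((n:ℝ)+1)) = ((qr.den:ℝ) * ε)/((n:ℝ)+1) := by ring
      rw [heq, lt_div_iff₀ hn1]
      linarith
    exact absurd (KM_engine n P hdeg a ha ε hε r hr M hvanM
      (KM_key_rational a ha qr.num.natAbs qr.den hupos qr.pos qr.reduced r hruv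
        (ε/((n:ℝ)+1)) hδ hbig)) hP
  · push_neg at hrat
    exact absurd (KM_engine n P hdeg a ha ε hε r hr M hvanM
      (KM_key_irrational a ha r hr hrat (ε/((n:ℝ)+1)) hδ)) hP
end

section
/- Let n be a positive integer and let W ⊆ ℝ^n be a closed convex cone. Let U ⊆ ℝ^n be a linear subspace spanned (over ℝ) by a set of vectors with rational coordinates. If there exists u ∈ U such that ⟨u, z⟩ > 0 for every z ∈ W with z ≠ 0, then there exists u' ∈ U all of whose coordinates are rational such that ⟨u', z⟩ > 0 for every z ∈ W with z ≠ 0. -/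
open scoped RealInnerProductSpace

/-- Let `W ⊆ ℝ^n` (with `n > 0`) be a closed convex cone and let `U` be a
linear subspace of `ℝ^n` spanned by vectors with rational coordinates.  If
some `u ∈ U` satisfies `⟪u, z⟫ > 0` for all nonzero `z ∈ W`, then there is a
`u' ∈ U` with rational coordinates satisfying `⟪u', z⟫ > 0` for all nonzero
`z ∈ W`. -/
theorem stmt_4 (n : ℕ) (hn : 0 < n)
    (W : ConvexCone ℝ (EuclideanSpace ℝ (Fin n)))
    (hW : IsClosed (W : Set (EuclideanSpace ℝ (Fin n))))
    (U : Submodule ℝ (EuclideanSpace ℝ (Fin n)))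
    (s : Set (EuclideanSpace ℝ (Fin n)))
    (hs : ∀ v ∈ s, ∀ i : Fin n, ∃ q : ℚ, v i = (q : ℝ))
    (hU : U = Submodule.span ℝ s)
    (u : EuclideanSpace ℝ (Fin n)) (hu : u ∈ U)
    (hpos : ∀ z ∈ W, z ≠ 0 → 0 < ⟪u, z⟫) :
    ∃ u' ∈ U, (∀ i : Fin n, ∃ q : ℚ, u' i = (q : ℝ)) ∧
      ∀ z ∈ W, z ≠ 0 → 0 < ⟪u', z⟫ := by
  classical
  by_cases hzero : ∀ z ∈ W, z = 0
  · exact ⟨0, U.zero_mem, fun i => ⟨0, by simp⟩,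
      fun z hz hne => absurd (hzero z hz) hne⟩
  push_neg at hzero
  obtain ⟨z₀, hz₀W, hz₀⟩ := hzero
  set K : Set (EuclideanSpace ℝ (Fin n)) := (W : Set (EuclideanSpace ℝ (Fin n))) ∩ Metric.sphere 0 1 with hKdef
  have hKc : IsCompact K := (isCompact_sphere (0:EuclideanSpace ℝ (Fin n)) 1).inter_left hW
  have hKne : K.Nonempty := by
    refine ⟨‖z₀‖⁻¹ • z₀, W.smul_mem (inv_pos.2 (norm_pos_iff.2 hz₀)) hz₀W, ?_⟩
    simp [norm_smul, norm_ne_zero_iff.2 hz₀, abs_of_nonneg (inv_nonneg.2 (norm_nonneg z₀))]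
  have hcont : ContinuousOn (fun z : EuclideanSpace ℝ (Fin n) => ⟪u, z⟫) K :=
    (continuous_const.inner continuous_id).continuousOn
  obtain ⟨zm, hzmK, hmin⟩ := hKc.exists_isMinOn hKne hcont
  set ε : ℝ := ⟪u, zm⟫ with hεdef
  have hzm0 : zm ≠ 0 := by
    intro h
    have := hzmK.2
    rw [h] at this
    simp [Metric.mem_sphere] at this
  have hε : 0 < ε := hpos zm hzmK.1 hzm0
  have hkey : ∀ z ∈ W, z ≠ 0 → ε * ‖z‖ ≤ ⟪u, z⟫ := by
    intro z hz hne
    have hnz : (0:ℝ) < ‖z‖ := norm_pos_iff.2 hne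
    have hmem : ‖z‖⁻¹ • z ∈ K := by
      refine ⟨W.smul_mem (inv_pos.2 hnz) hz, ?_⟩
      simp [norm_smul, abs_of_nonneg (inv_nonneg.2 (norm_nonneg z)), inv_mul_cancel₀ hnz.ne']
    have h1 : ε ≤ ⟪u, ‖z‖⁻¹ • z⟫ := isMinOn_iff.mp hmin _ hmem
    rw [real_inner_smul_right] at h1
    have hc : ‖z‖⁻¹ * ⟪u, z⟫ * ‖z‖ = ⟪u, z⟫ := by
      field_simp
    have h2 := mul_le_mul_of_nonneg_right h1 hnz.le
    rw [hc] at h2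
    exact h2
  -- approximate u by a rational combination
  rw [hU, Submodule.mem_span_set'] at hu
  obtain ⟨m, f, g, hfg⟩ := hu
  choose r hr using fun i => hs (g i) (g i).2
  set S : ℝ := ∑ i, ‖(g i : EuclideanSpace ℝ (Fin n))‖ with hSdef
  have hS0 : 0 ≤ S := Finset.sum_nonneg fun i _ => norm_nonneg _
  set δ : ℝ := ε / 2 / (S + 1) with hδdef
  have hδ : 0 < δ := by positivity
  choose q hq using fun i => exists_rat_near (f i) hδ
  set u' : EuclideanSpace ℝ (Fin n) := ∑ i, (q i : ℝ) • (g i : EuclideanSpace ℝ (Fin n)) with hu'def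
  have hmemU : u' ∈ U := by
    rw [hU]
    exact Submodule.sum_mem _ fun i _ =>
      Submodule.smul_mem _ _ (Submodule.subset_span (g i).2)
  have hcoord : ∀ j : Fin n, ∃ qq : ℚ, u' j = (qq : ℝ) := by
    intro j
    refine ⟨∑ i, q i * r i j, ?_⟩
    have h0 : u' j = ∑ i, ((q i : ℝ) • (g i : EuclideanSpace ℝ (Fin n))) j :=
      by rw [hu'def, WithLp.ofLp_sum]; exact Finset.sum_apply j Finset.univ _
    rw [h0]
    simp only [PiLp.smul_apply, smul_eq_mul]
    push_cast
    exact Finset.sum_congr rfl fun i _ => by rw [hr i j]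
  have hdiff : ‖u' - u‖ ≤ δ * S := by
    have heq : u' - u = ∑ i, ((q i : ℝ) - f i) • (g i : EuclideanSpace ℝ (Fin n)) := by
      rw [hu'def, ← hfg, ← Finset.sum_sub_distrib]
      exact Finset.sum_congr rfl fun i _ => (sub_smul _ _ _).symm
    rw [heq]
    calc ‖∑ i, ((q i : ℝ) - f i) • (g i : EuclideanSpace ℝ (Fin n))‖
        ≤ ∑ i, ‖((q i : ℝ) - f i) • (g i : EuclideanSpace ℝ (Fin n))‖ := norm_sum_le _ _
      _ ≤ ∑ i, δ * ‖(g i : EuclideanSpace ℝ (Fin n))‖ := by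
          refine Finset.sum_le_sum fun i _ => ?_
          rw [norm_smul, Real.norm_eq_abs]
          have h := (hq i).le
          rw [abs_sub_comm] at h
          exact mul_le_mul_of_nonneg_right h (norm_nonneg _)
      _ = δ * S := by rw [hSdef, Finset.mul_sum]
  have hdiff2 : ‖u' - u‖ ≤ ε / 2 := by
    have hle : δ * S ≤ ε / 2 := by
      rw [hδdef, div_mul_eq_mul_div, mul_comm, div_le_iff₀ (by positivity)]
      nlinarith
    linarith
  refine ⟨u', hmemU, hcoord, fun z hz hne => ?_⟩
  have hnz : (0:ℝ) < ‖z‖ := norm_pos_iff.2 hne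
  have h1 : ε * ‖z‖ ≤ ⟪u, z⟫ := hkey z hz hne
  have h2 : |⟪u' - u, z⟫| ≤ ‖u' - u‖ * ‖z‖ := abs_real_inner_le_norm _ _
  have h3 : ⟪u' - u, z⟫ = ⟪u', z⟫ - ⟪u, z⟫ := inner_sub_left _ _ _
  have h4 : -(‖u' - u‖ * ‖z‖) ≤ ⟪u' - u, z⟫ := neg_le_of_abs_le h2
  nlinarith [mul_le_mul_of_nonneg_right hdiff2 (norm_nonneg z)]
end
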